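/- Let G be a group acting on a simplicial complex K by exchangeable vertices, and let u be a vertex of K. If v and w both lie in the orbit G·u, then the transposition (v w) belongs to G; in particular, v and w are exchangeable in K. -/

import Mathlib

variable {V : Type*}

def IsComplex (F : Set (Finset V)) : Prop :=
  (∀ s ∈ F, s.Nonempty) ∧ ∀ s ∈ F, ∀ t ⊆ s, t.Nonempty → t ∈ F

def IsAuto [DecidableEq V] (F : Set (Finset V)) (φ : Equiv.Perm V) : Prop :=
  ∀ s : Finset V, s ∈ F ↔ s.image φ ∈ F

def IsExchange [DecidableEq V] (F : Set (Finset V)) (u v : V) (φ : Equiv.Perm V) : Prop :=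
  IsAuto F φ ∧ φ u = v ∧ φ v = u ∧ ∀ w : V, w ≠ u → w ≠ v → φ w = w

def Exchangeable [DecidableEq V] (F : Set (Finset V)) (u v : V) : Prop :=
  ∃ φ : Equiv.Perm V, IsExchange F u v φ

def vertices (F : Set (Finset V)) : Set V := {v | ({v} : Finset V) ∈ F}

def quotFaces (F : Set (Finset V)) (G : Subgroup (Equiv.Perm V)) : Set (Finset (Set V)) :=
  {S | ∃ s ∈ F, (↑S : Set (Set V)) = (fun v => MulAction.orbit (↥G) v) '' ↑s}

def ActsByExch [DecidableEq V] (F : Set (Finset V)) (G : Subgroup (Equiv.Perm V)) : Prop :=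
  ∃ M : Set (Equiv.Perm V), G = Subgroup.closure M ∧
    ∀ φ ∈ M, ∃ u v : V, u ≠ v ∧ IsExchange F u v φ

def fullSubFaces (F : Set (Finset V)) (W : Set V) : Set (Finset V) :=
  {s ∈ F | ↑s ⊆ W}

lemma isAuto_one' [DecidableEq V] (F : Set (Finset V)) : IsAuto F 1 := by
  intro s; simp

lemma isAuto_mul' [DecidableEq V] {F : Set (Finset V)} {φ ψ : Equiv.Perm V}
    (hφ : IsAuto F φ) (hψ : IsAuto F ψ) : IsAuto F (φ * ψ) := by
  intro s
  rw [hψ s, hφ (s.image ψ), Finset.image_image]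
  rfl

lemma isAuto_inv' [DecidableEq V] {F : Set (Finset V)} {φ : Equiv.Perm V}
    (hφ : IsAuto F φ) : IsAuto F φ⁻¹ := by
  intro s
  have h2 := hφ (s.image ⇑φ⁻¹)
  rw [Finset.image_image] at h2
  have hid : (⇑φ ∘ ⇑φ⁻¹) = id := by ext x; simp
  rw [hid, Finset.image_id] at h2
  exact h2.symm

lemma isExchange_eq_swap' [DecidableEq V] {F : Set (Finset V)} {a b : V} {φ : Equiv.Perm V}
    (h : IsExchange F a b φ) : φ = Equiv.swap a b := by
  ext x
  rcases eq_or_ne x a with rfl | hxa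
  · simp [h.2.1]
  rcases eq_or_ne x b with rfl | hxb
  · simp [h.2.2.1]
  · simp [h.2.2.2 x hxa hxb, Equiv.swap_apply_of_ne_of_ne hxa hxb]

/-- If `G` acts on the simplicial complex `F` by exchangeable vertices and `v`, `w` lie
in the same vertex orbit `G·u`, then the transposition `(v w)` belongs to `G`; in
particular `v` and `w` are exchangeable in `F`. -/
theorem transposition_of_same_orbit [DecidableEq V] (F : Set (Finset V)) (hF : IsComplex F)
    (G : Subgroup (Equiv.Perm V)) (hG : ActsByExch F G) (u v w : V)
    (hu : u ∈ vertices F)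
    (hv : v ∈ MulAction.orbit (↥G) u) (hw : w ∈ MulAction.orbit (↥G) u) :
    Equiv.swap v w ∈ G ∧ Exchangeable F v w := by
  obtain ⟨M, hGM, hM⟩ := hG
  have hMG : M ⊆ (G : Set (Equiv.Perm V)) := by
    rw [hGM]; exact Subgroup.subset_closure
  have hauto : ∀ g ∈ G, IsAuto F g := by
    intro g hg
    rw [hGM] at hg
    induction hg using Subgroup.closure_induction with
    | mem x hx =>
        obtain ⟨a, b, _, hex⟩ := hM x hx
        exact hex.1
    | one => exact isAuto_one' F
    | mul x y _ _ ihx ihy => exact isAuto_mul' ihx ihy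
    | inv x _ ihx => exact isAuto_inv' ihx
  have key : ∀ g ∈ G, ∀ x : V, Equiv.swap x (g x) ∈ G := by
    intro g hg
    rw [hGM] at hg
    induction hg using Subgroup.closure_induction with
    | mem φ hφ =>
        intro x
        obtain ⟨a, b, _, hex⟩ := hM φ hφ
        have hφG : φ ∈ G := hMG hφ
        have hφs := isExchange_eq_swap' hex
        rcases eq_or_ne x a with rfl | hxa
        · rw [hex.2.1, ← hφs]; exact hφG
        rcases eq_or_ne x b with rfl | hxb
        · rw [hex.2.2.1, Equiv.swap_comm, ← hφs]; exact hφG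
        · rw [hex.2.2.2 x hxa hxb, Equiv.swap_self]
          exact G.one_mem
    | one =>
        intro x
        rw [Equiv.Perm.one_apply, Equiv.swap_self]; exact G.one_mem
    | mul g h hgc hhc ihg ihh =>
        intro x
        have h1 : Equiv.swap x (h x) ∈ G := ihh x
        have h2 : Equiv.swap (h x) (g (h x)) ∈ G := ihg (h x)
        have hmul : (g * h) x = g (h x) := rfl
        rw [hmul]
        rcases eq_or_ne x (h x) with he | hne
        · nth_rewrite 1 [he]
          exact h2
        rcases eq_or_ne (h x) (g (h x)) with he2 | hne2
        · rw [← he2]; exact h1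
        rcases eq_or_ne x (g (h x)) with he3 | hne3
        · rw [← he3, Equiv.swap_self]; exact G.one_mem
        · have hconj : Equiv.swap x (g (h x)) =
              Equiv.swap (h x) (g (h x)) * Equiv.swap x (h x) *
                (Equiv.swap (h x) (g (h x)))⁻¹ := by
            rw [← Equiv.swap_apply_apply, Equiv.swap_apply_of_ne_of_ne hne hne3,
              Equiv.swap_apply_left]
          rw [hconj]
          exact G.mul_mem (G.mul_mem h2 h1) (G.inv_mem h2)
    | inv g hgc ihg =>
        intro x
        have hx := ihg (g⁻¹ x)
        rw [Equiv.Perm.coe_inv, Equiv.apply_symm_apply] at hx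
        rw [Equiv.swap_comm]
        exact hx
  obtain ⟨g, hgv⟩ := hv
  obtain ⟨h, hhw⟩ := hw
  have hgv' : (g : Equiv.Perm V) u = v := hgv
  have hhw' : (h : Equiv.Perm V) u = w := hhw
  have hk : ((h * g⁻¹ : ↥G) : Equiv.Perm V) ∈ G := (h * g⁻¹).2
  have hmem := key _ hk ((g : Equiv.Perm V) u)
  have happ : ((h * g⁻¹ : ↥G) : Equiv.Perm V) ((g : Equiv.Perm V) u) = (h : Equiv.Perm V) u := by
    simp
  rw [happ, hgv', hhw'] at hmem
  exact ⟨hmem, Equiv.swap v w, hauto _ hmem, Equiv.swap_apply_left v w,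
    Equiv.swap_apply_right v w, fun x hxv hxw => Equiv.swap_apply_of_ne_of_ne hxv hxw⟩
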